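/- arXiv:math/0410540 — 4 statements merged into one kernel-verified Lean document; each statement's English description precedes it below -/
import Mathlib

section
/- For any polynomial f ∈ ℤ[x], prime p, and integer r ≥ 1, f(x)^{p^r} ≡ f(x^p)^{p^{r-1}} (mod p^r), i.e., every coefficient of f(x)^{p^r} - f(x^p)^{p^{r-1}} is divisible by p^r. -/
open Polynomial

theorem aux_base (f : Polynomial ℤ) (p : ℕ) (hp : p.Prime) :
    (p : Polynomial ℤ) ∣ f ^ p - f.comp (X ^ p) := by
  haveI : Fact p.Prime := ⟨hp⟩
  have hC : (p : Polynomial ℤ) = C (p : ℤ) := by simp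
  rw [hC, C_dvd_iff_dvd_coeff]
  intro n
  rw [← ZMod.intCast_zmod_eq_zero_iff_dvd]
  have : map (Int.castRingHom (ZMod p)) (f ^ p - f.comp (X ^ p)) = 0 := by
    rw [Polynomial.map_sub, Polynomial.map_pow, ← expand_eq_comp_X_pow, map_expand]
    have := map_frobenius_expand p (map (Int.castRingHom (ZMod p)) f)
    rw [show frobenius (ZMod p) p = RingHom.id (ZMod p) from ZMod.frobenius_zmod p,
      Polynomial.map_id] at this
    rw [this, sub_self]
  have h2 := congrArg (fun g => g.coeff n) this
  simpa only [coeff_map, coeff_zero, eq_intCast] using h2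

/-- For `f ∈ ℤ[x]`, prime `p` and `r ≥ 1`, every coefficient of
`f(x)^(p^r) - f(x^p)^(p^(r-1))` is divisible by `p^r`. -/
theorem stmt_7 (f : Polynomial ℤ) (p : ℕ) (hp : p.Prime) (r : ℕ) (hr : 1 ≤ r) :
    ∀ k : ℕ, (p : ℤ) ^ r ∣ (f ^ (p ^ r) - (f.comp (X ^ p)) ^ (p ^ (r - 1))).coeff k := by
  intro k
  have h := dvd_sub_pow_of_dvd_sub (aux_base f p hp) (r - 1)
  rw [← pow_mul, ← pow_succ', Nat.sub_add_cancel hr] at h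
  have hC : (p : Polynomial ℤ) ^ r = C ((p : ℤ) ^ r) := by simp
  rw [hC, C_dvd_iff_dvd_coeff] at h
  exact h k
end

section
/- Let g(x) = a(x)/b(x) with a, b ∈ ℤ[x], b monic, let p be prime and r ≥ 1. Then g(x)^{p^r} - g(x^p)^{p^{r-1}} = p^r · h(x) for some h(x) in the ring L of rational functions with monic integer denominator. -/
open Polynomial

noncomputable def Phi : Polynomial ℤ →+* RatFunc ℚ :=
  (algebraMap (Polynomial ℚ) (RatFunc ℚ)).comp (mapRingHom (Int.castRingHom ℚ))

lemma Phi_apply (f : Polynomial ℤ) :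
    Phi f = algebraMap (Polynomial ℚ) (RatFunc ℚ) (f.map (Int.castRingHom ℚ)) := rfl

lemma Phi_ne_zero {d : Polynomial ℤ} (hd : d.Monic) : Phi d ≠ 0 :=
  RatFunc.algebraMap_ne_zero (hd.map (Int.castRingHom ℚ)).ne_zero

/-- The subring of rational functions expressible with monic integer denominator. -/
noncomputable def Lsub : Subring (RatFunc ℚ) where
  carrier := {x | ∃ c d : Polynomial ℤ, d.Monic ∧ x = Phi c / Phi d}
  one_mem' := ⟨1, 1, monic_one, by simp⟩
  zero_mem' := ⟨0, 1, monic_one, by simp⟩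
  mul_mem' := by
    rintro x y ⟨c₁, d₁, hd₁, rfl⟩ ⟨c₂, d₂, hd₂, rfl⟩
    exact ⟨c₁ * c₂, d₁ * d₂, hd₁.mul hd₂, by rw [map_mul, map_mul, div_mul_div_comm]⟩
  add_mem' := by
    rintro x y ⟨c₁, d₁, hd₁, rfl⟩ ⟨c₂, d₂, hd₂, rfl⟩
    refine ⟨c₁ * d₂ + c₂ * d₁, d₁ * d₂, hd₁.mul hd₂, ?_⟩
    rw [map_add, map_mul, map_mul, map_mul,
      div_add_div _ _ (Phi_ne_zero hd₁) (Phi_ne_zero hd₂)]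
    ring_nf
  neg_mem' := by
    rintro x ⟨c, d, hd, rfl⟩
    exact ⟨-c, d, hd, by rw [map_neg, neg_div]⟩

lemma frob_poly (p : ℕ) (hp : p.Prime) (f : Polynomial ℤ) :
    ∃ s : Polynomial ℤ, f ^ p = f.comp (X ^ p) + C (p : ℤ) * s := by
  haveI : Fact p.Prime := ⟨hp⟩
  have hdvd : C ((p : ℕ) : ℤ) ∣ f ^ p - f.comp (X ^ p) := by
    rw [C_dvd_iff_dvd_coeff]
    intro i
    have hmap : (f ^ p - f.comp (X ^ p)).map (Int.castRingHom (ZMod p)) = 0 := by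
      have := Polynomial.map_frobenius_expand (p := p) (f.map (Int.castRingHom (ZMod p)))
      rw [ZMod.frobenius_zmod, Polynomial.map_id] at this
      rw [Polynomial.map_sub, Polynomial.map_pow, Polynomial.map_comp,
        Polynomial.map_pow, Polynomial.map_X, ← Polynomial.expand_eq_comp_X_pow, this,
        sub_self]
    have := congrArg (fun q => Polynomial.coeff q i) hmap
    simp only [Polynomial.coeff_map, Polynomial.coeff_zero] at this
    exact (ZMod.intCast_zmod_eq_zero_iff_dvd _ p).mp this
  obtain ⟨s, hs⟩ := hdvd
  exact ⟨s, by linear_combination hs⟩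

/-- For `g(x) = a(x)/b(x)` with `a, b ∈ ℤ[x]`, `b` monic, a prime `p` and `r ≥ 1`,
`g(x)^(p^r) - g(x^p)^(p^(r-1)) = p^r · h(x)` for some `h` in the ring `L` of rational
functions with monic integer denominator. -/
theorem stmt_12 (a b : Polynomial ℤ) (hb : b.Monic) (p : ℕ) (hp : p.Prime)
    (r : ℕ) (hr : 1 ≤ r) :
    ∃ c d : Polynomial ℤ, d.Monic ∧
      (algebraMap (Polynomial ℚ) (RatFunc ℚ) (a.map (Int.castRingHom ℚ))
          / algebraMap (Polynomial ℚ) (RatFunc ℚ) (b.map (Int.castRingHom ℚ))) ^ (p ^ r)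
        - (algebraMap (Polynomial ℚ) (RatFunc ℚ) ((a.comp (X ^ p)).map (Int.castRingHom ℚ))
            / algebraMap (Polynomial ℚ) (RatFunc ℚ)
              ((b.comp (X ^ p)).map (Int.castRingHom ℚ))) ^ (p ^ (r - 1))
      = (p : RatFunc ℚ) ^ r *
          (algebraMap (Polynomial ℚ) (RatFunc ℚ) (c.map (Int.castRingHom ℚ))
            / algebraMap (Polynomial ℚ) (RatFunc ℚ) (d.map (Int.castRingHom ℚ))) := by
  -- Notation
  set u : RatFunc ℚ := Phi a / Phi b with hu
  set v : RatFunc ℚ := Phi (a.comp (X ^ p)) / Phi (b.comp (X ^ p)) with hv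
  have hbc : (b.comp (X ^ p)).Monic := by
    have := hb.comp (monic_X_pow p) (by
      simp [natDegree_X_pow, hp.pos.ne'])
    exact this
  -- Step 1: u ^ p - v = p * w with w ∈ Lsub
  obtain ⟨s, hs⟩ := frob_poly p hp a
  obtain ⟨t, ht⟩ := frob_poly p hp b
  have hbp : (b ^ p).Monic := hb.pow p
  have hkey : ∃ w : Polynomial ℤ, ∃ e : Polynomial ℤ, e.Monic ∧
      u ^ p - v = (p : RatFunc ℚ) * (Phi w / Phi e) := by
    refine ⟨s * b.comp (X ^ p) - t * a.comp (X ^ p), b ^ p * b.comp (X ^ p),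
      hbp.mul hbc, ?_⟩
    rw [hu, hv, div_pow, ← map_pow, ← map_pow]
    rw [div_sub_div _ _ (Phi_ne_zero hbp) (Phi_ne_zero hbc), map_mul]
    have hnum : a ^ p * b.comp (X ^ p) - b ^ p * a.comp (X ^ p)
        = C (p : ℤ) * (s * b.comp (X ^ p) - t * a.comp (X ^ p)) := by
      rw [hs, ht]; ring
    rw [← map_mul Phi, ← map_mul Phi, ← map_sub Phi, hnum, map_mul, mul_div_assoc]
    congr 1
    rw [Phi_apply]
    simp
  obtain ⟨w, e, he, hwe⟩ := hkey
  -- Step 2: lift to the subring Lsub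
  have hu_mem : u ∈ Lsub := ⟨a, b, hb, rfl⟩
  have hv_mem : v ∈ Lsub := ⟨a.comp (X ^ p), b.comp (X ^ p), hbc, rfl⟩
  set U : Lsub := ⟨u, hu_mem⟩
  set V : Lsub := ⟨v, hv_mem⟩
  have hdvd : ((p : ℕ) : Lsub) ∣ U ^ p - V := by
    refine ⟨⟨Phi w / Phi e, ⟨w, e, he, rfl⟩⟩, ?_⟩
    apply Subtype.ext
    push_cast
    exact hwe
  have hfinal := dvd_sub_pow_of_dvd_sub hdvd (r - 1)
  rw [Nat.sub_add_cancel hr] at hfinal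
  obtain ⟨H, hH⟩ := hfinal
  obtain ⟨c, d, hd, hcd⟩ := H.2
  refine ⟨c, d, hd, ?_⟩
  have := congrArg (Subtype.val) hH
  push_cast at this
  rw [← pow_mul, ← pow_succ'] at this
  rw [Nat.sub_add_cancel hr] at this
  rw [← Phi_apply, ← Phi_apply, ← Phi_apply, ← Phi_apply, ← hu, ← hv, ← Phi_apply, ← Phi_apply]
  rw [this, hcd]
end

section
/- For a prime p and integers a ≥ b ≥ 0 and r ≥ 1, C(p^r a, p^r b) ≡ C(p^{r-1} a, p^{r-1} b) (mod p^{2r}). -/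
open Finset

/-- Product of the integers in `[1, n]` that are coprime to `p`. -/
def coprimePart (p n : ℕ) : ℕ := ∏ x ∈ Finset.range n, (if p ∣ (x + 1) then 1 else x + 1)

lemma coprimePart_coprime {p : ℕ} (hp : p.Prime) (n : ℕ) : Nat.Coprime p (coprimePart p n) := by
  refine Nat.Coprime.prod_right fun x _ => ?_
  split_ifs with h
  · exact Nat.coprime_one_right p
  · exact (hp.coprime_iff_not_dvd).mpr h

lemma factorial_eq_aux (p m : ℕ) :
    Nat.factorial m = p ^ (m / p) * Nat.factorial (m / p) * coprimePart p m := by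
  induction m with
  | zero => simp [coprimePart]
  | succ m ih =>
    rw [Nat.factorial_succ, Nat.succ_div, coprimePart, Finset.prod_range_succ,
      ← coprimePart]
    split_ifs with h
    · have h1 : (m + 1) / p = m / p + 1 := by rw [Nat.succ_div]; simp [h]
      have hc : p * (m / p + 1) = m + 1 := by rw [← h1]; exact Nat.mul_div_cancel' h
      rw [ih, Nat.factorial_succ, mul_one, pow_succ]
      calc (m+1) * (p ^ (m/p) * Nat.factorial (m/p) * coprimePart p m)
          = (p * (m/p+1)) * (p ^ (m/p) * Nat.factorial (m/p) * coprimePart p m) := by rw [hc]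
        _ = p ^ (m/p) * p * ((m/p+1) * Nat.factorial (m/p)) * coprimePart p m := by ring
    · rw [add_zero, ih]; ring

lemma factorial_mul_eq {p : ℕ} (hp : 0 < p) (n : ℕ) :
    Nat.factorial (p * n) = p ^ n * Nat.factorial n * coprimePart p (p * n) := by
  have := factorial_eq_aux p (p * n)
  rwa [Nat.mul_div_cancel_left n hp] at this

/-- The key exact identity relating `C(pm, pk)` and `C(m,k)`. -/
lemma choose_identity {p : ℕ} (hp : 0 < p) {m k : ℕ} (hkm : k ≤ m) :
    Nat.choose (p * m) (p * k) * (coprimePart p (p * k) * coprimePart p (p * (m - k))) =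
      Nat.choose m k * coprimePart p (p * m) := by
  have h1 : Nat.choose (p * m) (p * k) * Nat.factorial (p * k) * Nat.factorial (p * m - p * k)
      = Nat.factorial (p * m) := Nat.choose_mul_factorial_mul_factorial (Nat.mul_le_mul_left p hkm)
  have h2 : Nat.choose m k * Nat.factorial k * Nat.factorial (m - k) = Nat.factorial m :=
    Nat.choose_mul_factorial_mul_factorial hkm
  have hsub : p * m - p * k = p * (m - k) := by rw [Nat.mul_sub]
  rw [hsub] at h1
  rw [factorial_mul_eq hp m, factorial_mul_eq hp k, factorial_mul_eq hp (m - k), ← h2] at h1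
  -- h1 : C(pm,pk) * (p^k * k! * Cp(pk)) * (p^(m-k) * (m-k)! * Cp(p(m-k)))
  --      = p^m * (C(m,k) * k! * (m-k)!) * Cp(pm)
  have hpow : p ^ k * p ^ (m - k) = p ^ m := by
    rw [← pow_add]; congr 1; omega
  have key : (p ^ m * (Nat.factorial k * Nat.factorial (m - k))) *
      (Nat.choose (p * m) (p * k) * (coprimePart p (p * k) * coprimePart p (p * (m - k))))
      = (p ^ m * (Nat.factorial k * Nat.factorial (m - k))) *
      (Nat.choose m k * coprimePart p (p * m)) := by
    calc (p ^ m * (Nat.factorial k * Nat.factorial (m - k))) *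
        (Nat.choose (p * m) (p * k) * (coprimePart p (p * k) * coprimePart p (p * (m - k))))
        = (p ^ k * p ^ (m-k)) * (Nat.factorial k * Nat.factorial (m - k)) *
          (Nat.choose (p * m) (p * k) * (coprimePart p (p * k) * coprimePart p (p * (m - k)))) := by
            rw [hpow]
      _ = Nat.choose (p * m) (p * k) * (p ^ k * Nat.factorial k * coprimePart p (p * k)) *
          (p ^ (m-k) * Nat.factorial (m-k) * coprimePart p (p * (m - k))) := by ring
      _ = p ^ m * (Nat.choose m k * Nat.factorial k * Nat.factorial (m - k)) *
          coprimePart p (p * m) := h1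
      _ = (p ^ m * (Nat.factorial k * Nat.factorial (m - k))) *
          (Nat.choose m k * coprimePart p (p * m)) := by ring
  have hne : p ^ m * (Nat.factorial k * Nat.factorial (m - k)) ≠ 0 :=
    Nat.mul_ne_zero (pow_ne_zero m (by omega))
      (Nat.mul_ne_zero (Nat.factorial_ne_zero k) (Nat.factorial_ne_zero (m - k)))
  exact Nat.eq_of_mul_eq_mul_left (Nat.pos_of_ne_zero hne) key

lemma prod_add_of_sq_eq_zero {R : Type*} [CommRing R] {ι : Type*} [DecidableEq ι]
    {a : R} (ha : a * a = 0) (t : Finset ι) (f g : ι → R) :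
    ∏ y ∈ t, (f y + a * g y) =
      ∏ y ∈ t, f y + a * ∑ y ∈ t, g y * ∏ z ∈ t.erase y, f z := by
  induction t using Finset.induction_on with
  | empty => simp
  | @insert x t hx ih =>
    rw [Finset.prod_insert hx, ih, Finset.prod_insert hx, Finset.sum_insert hx,
      Finset.erase_insert hx]
    have hsum : ∑ y ∈ t, g y * ∏ z ∈ (insert x t).erase y, f z
        = f x * ∑ y ∈ t, g y * ∏ z ∈ t.erase y, f z := by
      rw [Finset.mul_sum]
      refine Finset.sum_congr rfl fun y hy => ?_
      have hxy : x ≠ y := fun h => hx (h ▸ hy)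
      rw [Finset.erase_insert_of_ne hxy, Finset.prod_insert
        (fun h => hx (Finset.mem_of_mem_erase h))]
      ring
    rw [hsum]
    linear_combination (g x * ∑ y ∈ t, g y * ∏ z ∈ t.erase y, f z) * ha

lemma sum_erase_dvd {p s : ℕ} (hp : p.Prime) (hps : p ≠ 2 ∨ 1 ≤ s) :
    p ^ (s + 1) ∣ ∑ y ∈ Finset.range (p ^ (s + 1)),
      (if p ∣ y + 1 then 0 else
        ∏ z ∈ (Finset.range (p ^ (s + 1))).erase y, (if p ∣ z + 1 then 1 else z + 1)) := by
  set q := p ^ (s + 1) with hqdef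
  have hp2 : 2 ≤ p := hp.two_le
  have hpq : p ∣ q := dvd_pow_self p (Nat.succ_ne_zero s)
  have hq2 : 2 ≤ q := le_trans hp2 (Nat.le_of_dvd (by positivity) hpq)
  haveI : NeZero q := ⟨by omega⟩
  rw [← ZMod.natCast_eq_zero_iff]
  push_cast
  set F : ℕ → ZMod q := fun z => if p ∣ z + 1 then 1 else ((z : ZMod q) + 1) with hF
  set t : ℕ → ZMod q := fun y => ∏ z ∈ (Finset.range q).erase y, F z with ht
  have hconv : ∑ y ∈ Finset.range q, (if p ∣ y + 1 then (0 : ZMod q) else t y)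
      = ∑ y ∈ (Finset.range q).filter (fun y => ¬ p ∣ y + 1), t y := by
    rw [Finset.sum_filter]
    refine Finset.sum_congr rfl fun y _ => ?_
    by_cases h : p ∣ y + 1 <;> simp [h]
  show ∑ y ∈ Finset.range q, (if p ∣ y + 1 then (0 : ZMod q) else t y) = 0
  rw [hconv]
  have hmem : ∀ y ∈ (Finset.range q).filter (fun y => ¬ p ∣ y + 1),
      ¬ p ∣ y + 1 ∧ y + 1 < q := by
    intro y hy
    rw [Finset.mem_filter, Finset.mem_range] at hy
    refine ⟨hy.2, ?_⟩
    rcases Nat.lt_or_ge (y + 1) q with h | h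
    · exact h
    · exact absurd (show p ∣ y + 1 by rw [show y + 1 = q from by omega]; exact hpq) hy.2
  refine Finset.sum_involution (fun y _ => q - 2 - y) ?_ ?_ ?_ ?_
  · -- t y + t (q - 2 - y) = 0
    intro y hy
    obtain ⟨hnd, hlt⟩ := hmem y hy
    show t y + t (q - 2 - y) = 0
    have hnd' : ¬ p ∣ (q - 2 - y) + 1 := by
      intro h
      rw [show (q - 2 - y) + 1 = q - (y + 1) from by omega] at h
      have : p ∣ y + 1 := by
        have := Nat.dvd_sub hpq h
        rwa [Nat.sub_sub_self (by omega)] at this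
      exact hnd this
    have hmem1 : y ∈ Finset.range q := Finset.mem_range.mpr (by omega)
    have hmem2 : q - 2 - y ∈ Finset.range q := Finset.mem_range.mpr (by omega)
    have e1 : F y * t y = ∏ z ∈ Finset.range q, F z := Finset.mul_prod_erase _ F hmem1
    have e2 : F (q - 2 - y) * t (q - 2 - y) = ∏ z ∈ Finset.range q, F z :=
      Finset.mul_prod_erase _ F hmem2
    have hFy : F y = ((y + 1 : ℕ) : ZMod q) := by rw [hF]; simp [hnd]
    have hFy' : F (q - 2 - y) = -((y + 1 : ℕ) : ZMod q) := by
      have hv : F (q - 2 - y) = ((q - 2 - y : ℕ) : ZMod q) + 1 := by rw [hF]; simp [hnd']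
      rw [hv]
      have h2 : ((q - 2 - y : ℕ) : ZMod q) + 1 = (((q - 2 - y) + 1 : ℕ) : ZMod q) := by
        push_cast; ring
      rw [h2, show (q - 2 - y) + 1 = q - (y + 1) from by omega,
        Nat.cast_sub (by omega : y + 1 ≤ q), ZMod.natCast_self]
      ring
    have hu : IsUnit (F y) := by
      rw [hFy, ZMod.isUnit_iff_coprime]
      exact Nat.Coprime.pow_right _ (Nat.coprime_comm.mp (hp.coprime_iff_not_dvd.mpr hnd))
    have key : F y * (t y + t (q - 2 - y)) = 0 := by
      rw [mul_add, e1]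
      have h3 : F y * t (q - 2 - y) = -(F (q - 2 - y) * t (q - 2 - y)) := by
        rw [hFy', hFy]; ring
      rw [h3, e2]; ring
    exact (hu.mul_right_eq_zero).mp key
  · -- no fixed points
    intro y hy _
    obtain ⟨hnd, hlt⟩ := hmem y hy
    intro hfix
    have hfix' : q - 2 - y = y := hfix
    have h2 : q = 2 * (y + 1) := by omega
    by_cases hp2' : p = 2
    · have hs1 : 1 ≤ s := hps.resolve_left (fun h => h hp2')
      have hq2s : q = 2 * 2 ^ s := by rw [hqdef, hp2', pow_succ']
      have hy1 : y + 1 = 2 ^ s := by omega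
      exact hnd (by rw [hp2', hy1]; exact dvd_pow_self 2 (by omega))
    · have hoq : Odd q := Odd.pow (hp.odd_of_ne_two hp2')
      rw [h2] at hoq
      exact (Nat.not_odd_iff_even.mpr ⟨y + 1, by ring⟩) hoq
  · -- maps into the set
    intro y hy
    obtain ⟨hnd, hlt⟩ := hmem y hy
    rw [Finset.mem_filter, Finset.mem_range]
    constructor
    · show q - 2 - y < q; omega
    · show ¬ p ∣ (q - 2 - y) + 1
      intro h
      rw [show (q - 2 - y) + 1 = q - (y + 1) from by omega] at h
      have : p ∣ y + 1 := by
        have := Nat.dvd_sub hpq h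
        rwa [Nat.sub_sub_self (by omega)] at this
      exact hnd this
  · -- involutive
    intro y hy
    obtain ⟨hnd, hlt⟩ := hmem y hy
    show q - 2 - (q - 2 - y) = y
    omega

lemma block_congr {p s : ℕ} (hp : p.Prime) (hps : p ≠ 2 ∨ 1 ≤ s) (u : ℕ) :
    (∏ y ∈ Finset.range (p ^ (s + 1)), (if p ∣ y + 1 then 1 else u * p ^ (s + 1) + (y + 1)))
      ≡ coprimePart p (p ^ (s + 1)) [MOD p ^ (s + 1) * p ^ (s + 1)] := by
  set q := p ^ (s + 1) with hqdef
  set N := q * q with hNdef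
  rw [← ZMod.natCast_eq_natCast_iff]
  set A : ZMod N := ((u * q : ℕ) : ZMod N) with hA
  have ha : A * A = 0 := by
    rw [hA, ← Nat.cast_mul, show u * q * (u * q) = (u * u) * (q * q) from by ring,
      Nat.cast_mul, ← hNdef, ZMod.natCast_self, mul_zero]
  set f : ℕ → ZMod N := fun z => if p ∣ z + 1 then 1 else ((z : ZMod N) + 1) with hf
  set g : ℕ → ZMod N := fun z => if p ∣ z + 1 then 0 else 1 with hg
  have hfactor : ∀ y ∈ Finset.range q,
      ((if p ∣ y + 1 then 1 else u * q + (y + 1) : ℕ) : ZMod N) = f y + A * g y := by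
    intro y _
    by_cases h : p ∣ y + 1
    · simp [hf, hg, h]
    · rw [if_neg h]
      rw [hf, hg]
      simp only [if_neg h]
      rw [hA]
      push_cast
      ring
  calc ((∏ y ∈ Finset.range q, (if p ∣ y + 1 then 1 else u * q + (y + 1)) : ℕ) : ZMod N)
      = ∏ y ∈ Finset.range q, (f y + A * g y) := by
        rw [Nat.cast_prod]; exact Finset.prod_congr rfl hfactor
    _ = ∏ y ∈ Finset.range q, f y
        + A * ∑ y ∈ Finset.range q, g y * ∏ z ∈ (Finset.range q).erase y, f z :=
        prod_add_of_sq_eq_zero ha _ f g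
    _ = ((coprimePart p q : ℕ) : ZMod N) := by
        have hsum : ∑ y ∈ Finset.range q, g y * ∏ z ∈ (Finset.range q).erase y, f z
            = ((∑ y ∈ Finset.range q, (if p ∣ y + 1 then 0 else
                ∏ z ∈ (Finset.range q).erase y, (if p ∣ z + 1 then 1 else z + 1)) : ℕ) : ZMod N) := by
          rw [Nat.cast_sum]
          refine Finset.sum_congr rfl fun y _ => ?_
          by_cases h : p ∣ y + 1
          · simp [hg, h]
          · rw [hg]
            simp only [if_neg h]
            rw [one_mul, Nat.cast_prod]
            refine Finset.prod_congr rfl fun z _ => ?_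
            by_cases h2 : p ∣ z + 1
            · simp [hf, h2]
            · rw [hf]; simp only [if_neg h2]; push_cast; ring
        obtain ⟨c, hc⟩ := sum_erase_dvd hp hps
        rw [hsum, ← hqdef] at *
        rw [hc]
        have : A * ((q * c : ℕ) : ZMod N) = 0 := by
          rw [hA, ← Nat.cast_mul, show u * q * (q * c) = (u * c) * (q * q) from by ring,
            Nat.cast_mul, ← hNdef, ZMod.natCast_self, mul_zero]
        rw [this, add_zero, coprimePart, Nat.cast_prod]
        refine Finset.prod_congr rfl fun z _ => ?_
        by_cases h2 : p ∣ z + 1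
        · simp [hf, h2]
        · rw [hf]; simp only [if_neg h2]; push_cast; ring

lemma coprimePart_mul_congr {p s : ℕ} (hp : p.Prime) (hps : p ≠ 2 ∨ 1 ≤ s) (t : ℕ) :
    coprimePart p (p ^ (s + 1) * t) ≡ (coprimePart p (p ^ (s + 1))) ^ t
      [MOD p ^ (s + 1) * p ^ (s + 1)] := by
  set q := p ^ (s + 1) with hqdef
  have hpq : p ∣ q := dvd_pow_self p (Nat.succ_ne_zero s)
  induction t with
  | zero => simp only [Nat.mul_zero, pow_zero, coprimePart, Finset.range_zero,
      Finset.prod_empty]; rfl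
  | succ t ih =>
    have hsplit : coprimePart p (q * (t + 1))
        = coprimePart p (q * t) * ∏ y ∈ Finset.range q,
            (if p ∣ y + 1 then 1 else t * q + (y + 1)) := by
      rw [coprimePart, show q * (t + 1) = q * t + q from by ring, Finset.prod_range_add,
        ← coprimePart]
      congr 1
      refine Finset.prod_congr rfl fun y _ => ?_
      have hcond : p ∣ q * t + y + 1 ↔ p ∣ y + 1 := by
        constructor
        · intro h
          have := Nat.dvd_sub h (Dvd.dvd.mul_right hpq t)
          rwa [show q * t + y + 1 - q * t = y + 1 from by omega] at this
        · intro h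
          have : p ∣ q * t := Dvd.dvd.mul_right hpq t
          rw [show q * t + y + 1 = q * t + (y + 1) from by ring]
          exact Nat.dvd_add this h
      exact if_congr hcond rfl (by ring)
    rw [hsplit, pow_succ]
    exact Nat.ModEq.mul ih (block_congr hp hps t)

lemma choose_congr_step {p s : ℕ} (hp : p.Prime) (hps : p ≠ 2 ∨ 1 ≤ s) {m k : ℕ}
    (hkm : k ≤ m) (hm : p ^ s ∣ m) (hk : p ^ s ∣ k) :
    Nat.choose (p * m) (p * k) ≡ Nat.choose m k [MOD p ^ (2 * s + 2)] := by
  set q := p ^ (s + 1) with hqdef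
  have hppos : 0 < p := hp.pos
  have hpspos : 0 < p ^ s := pow_pos hppos s
  obtain ⟨m', hm'⟩ := hm
  obtain ⟨k', hk'⟩ := hk
  have hk'm' : k' ≤ m' :=
    Nat.le_of_mul_le_mul_left (by rw [← hm', ← hk']; exact hkm) hpspos
  have hqm : p * m = q * m' := by rw [hm', hqdef, pow_succ]; ring
  have hqk : p * k = q * k' := by rw [hk', hqdef, pow_succ]; ring
  have hqmk : p * (m - k) = q * (m' - k') := by
    rw [hm', hk', hqdef, Nat.mul_sub, Nat.mul_sub, pow_succ]; ring_nf
  have hmod : p ^ (2 * s + 2) = q * q := by rw [hqdef, ← pow_add]; congr 1; omega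
  set G := coprimePart p q with hG
  have c1 : coprimePart p (p * m) ≡ G ^ m' [MOD q * q] := by
    rw [hqm]; exact coprimePart_mul_congr hp hps m'
  have c2 : coprimePart p (p * k) ≡ G ^ k' [MOD q * q] := by
    rw [hqk]; exact coprimePart_mul_congr hp hps k'
  have c3 : coprimePart p (p * (m - k)) ≡ G ^ (m' - k') [MOD q * q] := by
    rw [hqmk]; exact coprimePart_mul_congr hp hps (m' - k')
  have hid := choose_identity hppos hkm
  have chain : Nat.choose (p * m) (p * k) * G ^ m' ≡ Nat.choose m k * G ^ m' [MOD q * q] := by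
    have e1 : G ^ k' * G ^ (m' - k') = G ^ m' := by
      rw [← pow_add]; congr 1; omega
    calc Nat.choose (p * m) (p * k) * G ^ m'
        = Nat.choose (p * m) (p * k) * (G ^ k' * G ^ (m' - k')) := by rw [e1]
      _ ≡ Nat.choose (p * m) (p * k) *
            (coprimePart p (p * k) * coprimePart p (p * (m - k))) [MOD q * q] :=
          Nat.ModEq.mul_left _ (Nat.ModEq.mul c2.symm c3.symm)
      _ = Nat.choose m k * coprimePart p (p * m) := hid
      _ ≡ Nat.choose m k * G ^ m' [MOD q * q] := Nat.ModEq.mul_left _ c1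
  rw [hmod]
  refine Nat.ModEq.cancel_right_of_coprime ?_ chain
  have h1 : Nat.Coprime q G := Nat.Coprime.pow_left (s + 1) (coprimePart_coprime hp q)
  exact Nat.Coprime.pow_right m' (h1.mul h1)

lemma coprimePart_two (n : ℕ) : coprimePart 2 (2 * n) ≡ 3 ^ (n / 2) [MOD 4] := by
  induction n with
  | zero => rfl
  | succ n ih =>
    have hsplit : coprimePart 2 (2 * (n + 1)) = coprimePart 2 (2 * n) * (2 * n + 1) := by
      rw [coprimePart, show 2 * (n + 1) = (2 * n + 1) + 1 from by ring,
        Finset.prod_range_succ, Finset.prod_range_succ, ← coprimePart]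
      rw [if_pos (show 2 ∣ (2 * n + 1) + 1 from ⟨n + 1, by ring⟩),
        if_neg (show ¬ 2 ∣ 2 * n + 1 from by omega)]
      ring
    rw [hsplit]
    rcases Nat.even_or_odd n with he | ho
    · obtain ⟨j, hj⟩ := he
      have h1 : (n + 1) / 2 = n / 2 := by omega
      rw [h1]
      have h2 : 2 * n + 1 ≡ 1 [MOD 4] := by
        show (2 * n + 1) % 4 = 1 % 4; omega
      simpa using Nat.ModEq.mul ih h2
    · obtain ⟨j, hj⟩ := ho
      have h1 : (n + 1) / 2 = n / 2 + 1 := by omega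
      rw [h1, pow_succ]
      have h2 : 2 * n + 1 ≡ 3 [MOD 4] := by
        show (2 * n + 1) % 4 = 3 % 4; omega
      exact Nat.ModEq.mul ih h2

lemma choose_even {m k : ℕ} (hm : 2 ∣ m) (hk : ¬ 2 ∣ k) (hkm : k ≤ m) :
    2 ∣ Nat.choose m k := by
  have hk1 : 1 ≤ k := by omega
  have hm1 : 1 ≤ m := by omega
  have h := Nat.add_one_mul_choose_eq (m - 1) (k - 1)
  rw [Nat.sub_add_cancel hm1,
    Nat.sub_add_cancel hk1] at h
  have hdvd : 2 ∣ Nat.choose m k * k := by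
    rw [← h]; exact Dvd.dvd.mul_right hm _
  exact (Nat.Coprime.dvd_of_dvd_mul_right (by
    have : k % 2 = 1 := by omega
    exact Nat.coprime_two_left.mpr (Nat.odd_iff.mpr this)) hdvd)

lemma choose_congr_two {m k : ℕ} (hkm : k ≤ m) :
    Nat.choose (2 * m) (2 * k) ≡ Nat.choose m k [MOD 4] := by
  have hid := choose_identity (p := 2) (by norm_num) hkm
  have c1 := coprimePart_two m
  have c2 := coprimePart_two k
  have c3 := coprimePart_two (m - k)
  have hcop : ∀ n : ℕ, Nat.gcd 4 (3 ^ n) = 1 := fun n =>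
    Nat.Coprime.pow_right n (by norm_num)
  by_cases hpar : ¬ 2 ∣ k ∧ ¬ 2 ∣ (m - k)
  · -- hard case: k and m - k both odd
    have hmk : 2 ∣ m := by omega
    have ht : m / 2 = k / 2 + (m - k) / 2 + 1 := by omega
    set t := k / 2 + (m - k) / 2 with htdef
    have chain : Nat.choose (2 * m) (2 * k) * 3 ^ t ≡ (Nat.choose m k * 3) * 3 ^ t [MOD 4] := by
      calc Nat.choose (2 * m) (2 * k) * 3 ^ t
          = Nat.choose (2 * m) (2 * k) * (3 ^ (k / 2) * 3 ^ ((m - k) / 2)) := by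
            rw [← pow_add]
        _ ≡ Nat.choose (2 * m) (2 * k) *
              (coprimePart 2 (2 * k) * coprimePart 2 (2 * (m - k))) [MOD 4] :=
            Nat.ModEq.mul_left _ (Nat.ModEq.mul c2.symm c3.symm)
        _ = Nat.choose m k * coprimePart 2 (2 * m) := hid
        _ ≡ Nat.choose m k * 3 ^ (m / 2) [MOD 4] := Nat.ModEq.mul_left _ c1
        _ = (Nat.choose m k * 3) * 3 ^ t := by rw [ht, pow_succ]; ring
    have h5 : Nat.choose (2 * m) (2 * k) ≡ Nat.choose m k * 3 [MOD 4] :=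
      Nat.ModEq.cancel_right_of_coprime (hcop t) chain
    obtain ⟨c, hc⟩ := choose_even hmk hpar.1 hkm
    refine h5.trans ?_
    rw [hc]
    show (2 * c * 3) % 4 = (2 * c) % 4
    omega
  · -- easy case
    have ht : m / 2 = k / 2 + (m - k) / 2 := by omega
    have chain : Nat.choose (2 * m) (2 * k) * 3 ^ (m / 2)
        ≡ Nat.choose m k * 3 ^ (m / 2) [MOD 4] := by
      calc Nat.choose (2 * m) (2 * k) * 3 ^ (m / 2)
          = Nat.choose (2 * m) (2 * k) * (3 ^ (k / 2) * 3 ^ ((m - k) / 2)) := by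
            rw [← pow_add, ← ht]
        _ ≡ Nat.choose (2 * m) (2 * k) *
              (coprimePart 2 (2 * k) * coprimePart 2 (2 * (m - k))) [MOD 4] :=
            Nat.ModEq.mul_left _ (Nat.ModEq.mul c2.symm c3.symm)
        _ = Nat.choose m k * coprimePart 2 (2 * m) := hid
        _ ≡ Nat.choose m k * 3 ^ (m / 2) [MOD 4] := Nat.ModEq.mul_left _ c1
    exact Nat.ModEq.cancel_right_of_coprime (hcop (m / 2)) chain

/-- For a prime `p`, integers `a ≥ b ≥ 0` and `r ≥ 1`,
`C(p^r a, p^r b) ≡ C(p^(r-1) a, p^(r-1) b) (mod p^(2r))`. -/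
theorem stmt_13 (p : ℕ) (hp : p.Prime) (r : ℕ) (hr : 1 ≤ r) (a b : ℕ) (hab : b ≤ a) :
    Nat.choose (p ^ r * a) (p ^ r * b)
      ≡ Nat.choose (p ^ (r - 1) * a) (p ^ (r - 1) * b) [MOD p ^ (2 * r)] := by
  by_cases hsp : p = 2 ∧ r = 1
  · obtain ⟨hp2, hr1⟩ := hsp
    subst hp2 hr1
    simpa using choose_congr_two hab
  · have hps : p ≠ 2 ∨ 1 ≤ r - 1 := by
      by_cases h : p = 2
      · right; have : r ≠ 1 := fun hh => hsp ⟨h, hh⟩; omega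
      · left; exact h
    have key := choose_congr_step hp hps (m := p ^ (r - 1) * a) (k := p ^ (r - 1) * b)
      (Nat.mul_le_mul_left _ hab) (dvd_mul_right _ _) (dvd_mul_right _ _)
    have e1 : p * (p ^ (r - 1) * a) = p ^ r * a := by
      rw [← mul_assoc, ← pow_succ']
      congr 2
      omega
    have e2 : p * (p ^ (r - 1) * b) = p ^ r * b := by
      rw [← mul_assoc, ← pow_succ']
      congr 2
      omega
    have e3 : 2 * (r - 1) + 2 = 2 * r := by omega
    rw [e1, e2, e3] at key
    exact key
end

section
/- Let p be prime, r ≥ 1, and a_1, ..., a_n nonnegative integers summing to a. Then the multinomial coefficient (p^r a)! / ((p^r a_1)! ··· (p^r a_n)!) is congruent to (p^{r-1} a)! / ((p^{r-1} a_1)! ··· (p^{r-1} a_n)!) modulo p^{2r}. -/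
open Finset Nat

private lemma my_prod_Ioc_id (n : ℕ) : ∏ j ∈ Ioc 0 n, j = n ! := by
  induction n with
  | zero => simp
  | succ n ih =>
    rw [Finset.prod_Ioc_succ_top (Nat.zero_le _), ih, Nat.factorial_succ, mul_comm]

private lemma my_fact_concat (c n : ℕ) : (c + n)! = c ! * ∏ u ∈ Ioc 0 n, (c + u) := by
  rw [← my_prod_Ioc_id, ← my_prod_Ioc_id,
    ← Finset.prod_Ioc_consecutive _ (Nat.zero_le c) (Nat.le_add_right c n)]
  congr 1
  have h : Ioc c (c + n) = (Ioc 0 n).map (addLeftEmbedding c) := by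
    rw [Finset.map_add_left_Ioc]; norm_num
  rw [h, Finset.prod_map]
  rfl


private lemma my_filter_dvd {p : ℕ} (hp : 0 < p) (m : ℕ) :
    (Ioc 0 (p*m)).filter (fun u => p ∣ u) = (Ioc 0 m).image (fun i => p * i) := by
  ext j
  simp only [mem_filter, mem_Ioc, mem_image]
  constructor
  · rintro ⟨⟨h0, hle⟩, i, rfl⟩
    have hi : 0 < i := by
      rcases Nat.eq_zero_or_pos i with h | h
      · subst h; omega
      · exact h
    exact ⟨i, ⟨hi, Nat.le_of_mul_le_mul_left hle hp⟩, rfl⟩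
  · rintro ⟨i, ⟨h0, hle⟩, rfl⟩
    exact ⟨⟨by positivity, Nat.mul_le_mul_left p hle⟩, i, rfl⟩

/-- Splitting of `(p*m*x)!` into p-divisible part and blocks of p-coprime parts -/
private lemma my_fact_split {p : ℕ} (hp : 0 < p) (m x : ℕ) :
    (p*m*x)! = p^(m*x) * (m*x)! *
      ∏ k ∈ range x, ∏ u ∈ (Ioc 0 (p*m)).filter (fun u => ¬ p ∣ u), (p*m*k + u) := by
  induction x with
  | zero => simp
  | succ x ih =>
    have h1 : p*m*(x+1) = p*m*x + p*m := by ring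
    rw [h1, my_fact_concat, ih]
    rw [← Finset.prod_filter_mul_prod_filter_not (Ioc 0 (p*m)) (fun u => p ∣ u)]
    have h2 : ∏ u ∈ (Ioc 0 (p*m)).filter (fun u => p ∣ u), (p*m*x + u)
        = p^m * ∏ i ∈ Ioc 0 m, (m*x + i) := by
      rw [my_filter_dvd hp, Finset.prod_image (by
        intro a _ b _ h
        exact Nat.eq_of_mul_eq_mul_left hp h)]
      have : ∀ i ∈ Ioc 0 m, p*m*x + p*i = p * (m*x + i) := by intro i _; ring
      rw [Finset.prod_congr rfl this, Finset.prod_mul_distrib, Finset.prod_const,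
        Nat.card_Ioc, Nat.sub_zero]
    rw [h2]
    have h3 : (m*x)! * ∏ i ∈ Ioc 0 m, (m*x + i) = (m*(x+1))! := by
      rw [show m*(x+1) = m*x + m by ring, my_fact_concat]
    have h4 : m*(x+1) = m*x + m := by ring
    rw [Finset.prod_range_succ]
    calc p ^ (m * x) * (m * x)! *
          (∏ k ∈ range x, ∏ u ∈ filter (fun u => ¬p ∣ u) (Ioc 0 (p * m)), (p * m * k + u)) *
          ((p ^ m * ∏ i ∈ Ioc 0 m, (m * x + i)) *
            ∏ u ∈ filter (fun u => ¬p ∣ u) (Ioc 0 (p * m)), (p * m * x + u))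
        = (p ^ (m*x) * p^m) * ((m * x)! * ∏ i ∈ Ioc 0 m, (m * x + i)) *
          ((∏ k ∈ range x, ∏ u ∈ filter (fun u => ¬p ∣ u) (Ioc 0 (p * m)), (p * m * k + u)) *
            ∏ u ∈ filter (fun u => ¬p ∣ u) (Ioc 0 (p * m)), (p * m * x + u)) := by ring
      _ = _ := by rw [h3, ← pow_add, ← h4]



private lemma my_nat_identity {p : ℕ} (hp : 0 < p) (m b c : ℕ) :
    (m*(b+c)).choose (m*b) *
      ∏ k ∈ range (b+c), ∏ u ∈ (Ioc 0 (p*m)).filter (fun u => ¬ p ∣ u), (p*m*k + u)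
    = (p*m*(b+c)).choose (p*m*b) *
        ((∏ k ∈ range b, ∏ u ∈ (Ioc 0 (p*m)).filter (fun u => ¬ p ∣ u), (p*m*k + u)) *
         (∏ k ∈ range c, ∏ u ∈ (Ioc 0 (p*m)).filter (fun u => ¬ p ∣ u), (p*m*k + u))) := by
  have h1 : (p*m*(b+c)).choose (p*m*b) * (p*m*b)! * (p*m*c)! = (p*m*(b+c))! := by
    rw [mul_add (p*m), Nat.choose_symm_add]; exact Nat.add_choose_mul_factorial_mul_factorial _ _
  have h0 : (m*(b+c)).choose (m*b) * (m*b)! * (m*c)! = (m*(b+c))! := by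
    rw [mul_add m, Nat.choose_symm_add]; exact Nat.add_choose_mul_factorial_mul_factorial _ _
  have e := my_fact_split hp m (b+c)
  rw [← h1, my_fact_split hp m b, my_fact_split hp m c, ← h0] at e
  have pos : 0 < p^(m*(b+c)) * ((m*b)! * (m*c)!) := by positivity
  refine Nat.eq_of_mul_eq_mul_left pos ?_
  calc (p^(m*(b+c)) * ((m*b)! * (m*c)!)) * ((m*(b+c)).choose (m*b) *
          ∏ k ∈ range (b+c), ∏ u ∈ (Ioc 0 (p*m)).filter (fun u => ¬ p ∣ u), (p*m*k + u))
      = p^(m*(b+c)) * ((m*(b+c)).choose (m*b) * (m*b)! * (m*c)!) *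
          ∏ k ∈ range (b+c), ∏ u ∈ (Ioc 0 (p*m)).filter (fun u => ¬ p ∣ u), (p*m*k + u) := by
        ring
    _ = (p*m*(b+c)).choose (p*m*b) *
          (p^(m*b) * (m*b)! * ∏ k ∈ range b, ∏ u ∈ (Ioc 0 (p*m)).filter (fun u => ¬ p ∣ u), (p*m*k + u)) *
          (p^(m*c) * (m*c)! * ∏ k ∈ range c, ∏ u ∈ (Ioc 0 (p*m)).filter (fun u => ¬ p ∣ u), (p*m*k + u)) := e.symm
    _ = _ := by ring



private lemma my_expand {R : Type*} [CommRing R] (x : R) (hx : x * x = 0)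
    (s : Finset ℕ) (f : ℕ → R) :
    ∏ u ∈ s, (x + f u) = (∏ u ∈ s, f u) + x * ∑ u ∈ s, ∏ v ∈ s.erase u, f v := by
  classical
  induction s using Finset.induction_on with
  | empty => simp
  | insert _ _ hnot ih =>
    rename_i a s
    rw [Finset.prod_insert hnot, ih, Finset.prod_insert hnot, Finset.sum_insert hnot,
      Finset.erase_insert hnot]
    have herase : ∀ u ∈ s, ∏ v ∈ (insert a s).erase u, f v = f a * ∏ v ∈ s.erase u, f v := by
      intro u hu
      have hne : u ≠ a := fun h => hnot (h ▸ hu)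
      rw [Finset.erase_insert_of_ne hne.symm, Finset.prod_insert
        (fun h => hnot (Finset.erase_subset _ _ h))]
    rw [Finset.sum_congr rfl herase, ← Finset.mul_sum]
    linear_combination (∑ u ∈ s, ∏ v ∈ s.erase u, f v) * hx

private lemma my_D_zero {p : ℕ} (hp : p.Prime) {r : ℕ} (hr : 1 ≤ r) (hne : ¬ (p = 2 ∧ r = 1)) :
    (p^r : ℕ) ∣ ∑ u ∈ (Ioc 0 (p^r)).filter (fun u => ¬ p ∣ u),
      ∏ v ∈ ((Ioc 0 (p^r)).filter (fun u => ¬ p ∣ u)).erase u, v := by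
  have hQ : (0:ℕ) < p^r := pow_pos hp.pos r
  have hpQ : p ∣ p^r := dvd_pow_self p (by omega)
  rw [← ZMod.natCast_eq_zero_iff]
  push_cast
  refine Finset.sum_involution (fun u _ => p^r - u) ?_ ?_ ?_ ?_
  · -- f u + f (Q - u) = 0
    intro u hu
    simp only [Finset.mem_filter, Finset.mem_Ioc] at hu
    obtain ⟨⟨hu0, hule⟩, hund⟩ := hu
    have hult : u < p^r := lt_of_le_of_ne hule (fun h => hund (h ▸ hpQ))
    have hmem : u ∈ (Ioc 0 (p^r)).filter (fun u => ¬ p ∣ u) := by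
      simp only [Finset.mem_filter, Finset.mem_Ioc]; exact ⟨⟨hu0, hule⟩, hund⟩
    have hmem' : p^r - u ∈ (Ioc 0 (p^r)).filter (fun u => ¬ p ∣ u) := by
      simp only [Finset.mem_filter, Finset.mem_Ioc]
      refine ⟨⟨by omega, by omega⟩, fun h => hund ?_⟩
      have := Nat.dvd_sub hpQ h
      rwa [Nat.sub_sub_self hule] at this
    have hunit : IsUnit (u : ZMod (p^r)) := by
      rw [ZMod.isUnit_iff_coprime]
      exact ((Nat.Prime.coprime_iff_not_dvd hp).mpr hund).symm.pow_right r
    refine hunit.mul_left_cancel ?_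
    rw [mul_zero, mul_add]
    have h1 : (u : ZMod (p^r)) * ∏ v ∈ ((Ioc 0 (p^r)).filter (fun u => ¬ p ∣ u)).erase u, (v : ZMod (p^r))
        = ∏ v ∈ (Ioc 0 (p^r)).filter (fun u => ¬ p ∣ u), (v : ZMod (p^r)) :=
      Finset.mul_prod_erase _ _ hmem
    have hneg : (u : ZMod (p^r)) = -((p^r - u : ℕ) : ZMod (p^r)) := by
      have : ((p^r - u : ℕ) : ZMod (p^r)) + (u : ZMod (p^r)) = ((p^r : ℕ) : ZMod (p^r)) := by
        rw [← Nat.cast_add]; congr 1; omega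
      rw [ZMod.natCast_self] at this
      linear_combination this
    have h2 : (u : ZMod (p^r)) * ∏ v ∈ ((Ioc 0 (p^r)).filter (fun u => ¬ p ∣ u)).erase (p^r - u), (v : ZMod (p^r))
        = -(∏ v ∈ (Ioc 0 (p^r)).filter (fun u => ¬ p ∣ u), (v : ZMod (p^r))) := by
      rw [hneg, neg_mul, Finset.mul_prod_erase _ _ hmem']
    rw [h1, h2, add_neg_cancel]
  · -- f u ≠ 0 → g u ≠ u
    intro u hu hf
    simp only [Finset.mem_filter, Finset.mem_Ioc] at hu
    obtain ⟨⟨hu0, hule⟩, hund⟩ := hu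
    intro heq
    change p^r - u = u at heq
    have h2u : 2 * u = p^r := by omega
    have hpdvd : p ∣ 2 * u := h2u ▸ hpQ
    rcases (Nat.Prime.dvd_mul hp).mp hpdvd with h2 | hu'
    · have hp2 : p = 2 := ((Nat.prime_dvd_prime_iff_eq hp Nat.prime_two).mp h2)
      subst hp2
      have hr1 : r ≠ 1 := fun h => hne ⟨rfl, h⟩
      have hpow : (2:ℕ)^r = 2 * 2^(r-1) := by
        have hr2 : r - 1 + 1 = r := by omega
        calc (2:ℕ)^r = 2^(r-1+1) := by rw [hr2]
          _ = 2 * 2^(r-1) := by rw [Nat.pow_succ]; ring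
      have : u = 2^(r-1) := by omega
      exact hund (this ▸ dvd_pow_self 2 (by omega))
    · exact hund hu'
  · -- g_mem
    intro u hu
    simp only [Finset.mem_filter, Finset.mem_Ioc] at hu ⊢
    obtain ⟨⟨hu0, hule⟩, hund⟩ := hu
    have hult : u < p^r := lt_of_le_of_ne hule (fun h => hund (h ▸ hpQ))
    refine ⟨⟨by omega, by omega⟩, fun h => hund ?_⟩
    have := Nat.dvd_sub hpQ h
    rwa [Nat.sub_sub_self hule] at this
  · -- involution
    intro u hu
    simp only [Finset.mem_filter, Finset.mem_Ioc] at hu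
    show p^r - (p^r - u) = u
    omega



private lemma my_block {p r : ℕ} (hp : p.Prime) (hr : 1 ≤ r) (hne : ¬ (p = 2 ∧ r = 1)) (k : ℕ) :
    ((∏ u ∈ (Ioc 0 (p^r)).filter (fun u => ¬ p ∣ u), (p^r*k + u) : ℕ) : ZMod (p^(2*r)))
      = ((∏ u ∈ (Ioc 0 (p^r)).filter (fun u => ¬ p ∣ u), u : ℕ) : ZMod (p^(2*r))) := by
  have hx : ((p^r*k : ℕ) : ZMod (p^(2*r))) * ((p^r*k : ℕ) : ZMod (p^(2*r))) = 0 := by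
    rw [← Nat.cast_mul, ZMod.natCast_eq_zero_iff]
    exact ⟨k*k, by rw [two_mul, pow_add]; ring⟩
  rw [Nat.cast_prod, Nat.cast_prod]
  have hcast : ∀ u ∈ (Ioc 0 (p^r)).filter (fun u => ¬ p ∣ u),
      ((p^r*k + u : ℕ) : ZMod (p^(2*r))) = ((p^r*k : ℕ) : ZMod (p^(2*r))) + (u : ZMod (p^(2*r))) := by
    intro u _; push_cast; ring
  rw [Finset.prod_congr rfl hcast, my_expand _ hx]
  obtain ⟨e, he⟩ := my_D_zero hp hr hne
  have hD : (∑ u ∈ (Ioc 0 (p^r)).filter (fun u => ¬ p ∣ u),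
      ∏ v ∈ ((Ioc 0 (p^r)).filter (fun u => ¬ p ∣ u)).erase u, (v : ZMod (p^(2*r))))
      = ((p^r * e : ℕ) : ZMod (p^(2*r))) := by
    rw [← he]; push_cast; rfl
  rw [hD, ← Nat.cast_mul]
  have hz : ((p ^ r * k * (p ^ r * e) : ℕ) : ZMod (p^(2*r))) = 0 := by
    rw [ZMod.natCast_eq_zero_iff]
    exact ⟨k*e, by rw [two_mul, pow_add]; ring⟩
  rw [hz, add_zero]

private lemma my_V {p r : ℕ} (hp : p.Prime) (hr : 1 ≤ r) (hne : ¬ (p = 2 ∧ r = 1)) (x : ℕ) :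
    ((∏ k ∈ range x, ∏ u ∈ (Ioc 0 (p^r)).filter (fun u => ¬ p ∣ u), (p^r*k + u) : ℕ)
        : ZMod (p^(2*r)))
      = ((∏ u ∈ (Ioc 0 (p^r)).filter (fun u => ¬ p ∣ u), u : ℕ) : ZMod (p^(2*r))) ^ x := by
  rw [Nat.cast_prod]
  rw [Finset.prod_congr rfl (fun k _ => my_block hp hr hne k), Finset.prod_const, card_range]

private lemma my_key {p : ℕ} (hp : p.Prime) {r : ℕ} (hr : 1 ≤ r) (hne : ¬ (p = 2 ∧ r = 1))
    (b c : ℕ) :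
    (p^r*(b+c)).choose (p^r*b) ≡ (p^(r-1)*(b+c)).choose (p^(r-1)*b) [MOD p^(2*r)] := by
  rw [← ZMod.natCast_eq_natCast_iff]
  have hm : p * p^(r-1) = p^r := by
    calc p * p^(r-1) = p^(r-1+1) := (pow_succ' p (r-1)).symm
      _ = p^r := by congr 1; omega
  have id := my_nat_identity hp.pos (p^(r-1)) b c
  rw [hm] at id
  have idc := congrArg (Nat.cast : ℕ → ZMod (p^(2*r))) id
  rw [Nat.cast_mul, Nat.cast_mul, Nat.cast_mul, my_V hp hr hne, my_V hp hr hne,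
    my_V hp hr hne, ← pow_add] at idc
  have hW : IsUnit (((∏ u ∈ (Ioc 0 (p^r)).filter (fun u => ¬ p ∣ u), u : ℕ))
      : ZMod (p^(2*r))) := by
    rw [ZMod.isUnit_iff_coprime]
    refine Nat.Coprime.pow_right _ ?_
    refine (Nat.coprime_prod_left_iff).mpr ?_
    intro u hu
    simp only [Finset.mem_filter] at hu
    exact ((Nat.Prime.coprime_iff_not_dvd hp).mpr hu.2).symm
  exact (hW.pow (b+c)).mul_right_cancel idc.symm



private lemma my_sgn (k : ℕ) : ((2*k+1 : ℕ) : ZMod 4) = (-1)^k := by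
  induction k with
  | zero => decide
  | succ k ih =>
    have h4 : ((4*k+4 : ℕ) : ZMod 4) = 0 := by
      rw [ZMod.natCast_eq_zero_iff]; exact ⟨k+1, by ring⟩
    have h : ((2*(k+1)+1 : ℕ) : ZMod 4) = -(((2*k+1 : ℕ)) : ZMod 4) := by
      push_cast at h4 ⊢
      linear_combination h4
    rw [h, ih, pow_succ]; ring

private lemma my_gauss (b c : ℕ) :
    (∑ k ∈ range (b+c), k) = (∑ k ∈ range b, k) + (∑ k ∈ range c, k) + b*c := by
  induction c with
  | zero => simp
  | succ c ih =>
    rw [show b + (c+1) = (b+c)+1 by ring, Finset.sum_range_succ, ih, Finset.sum_range_succ]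
    ring

private lemma my_even_choose {b c : ℕ} (hb : Odd b) (hc : Odd c) :
    2 ∣ (b+c).choose b := by
  obtain ⟨i, hi⟩ := hb
  obtain ⟨j, hj⟩ := hc
  have hb1 : 1 ≤ b := by omega
  have hc1 : 1 ≤ c := by omega
  have h := Nat.add_one_mul_choose_eq (b+c-1) (b-1)
  rw [show b+c-1+1 = b+c by omega, show b-1+1 = b by omega] at h
  have h2 : 2 ∣ (b+c) * (b+c-1).choose (b-1) := by
    exact Dvd.dvd.mul_right (by omega : 2 ∣ b+c) _
  rw [h] at h2
  rcases (Nat.Prime.dvd_mul Nat.prime_two).mp h2 with h' | h'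
  · exact h'
  · exfalso; omega

private lemma my_key2 (b c : ℕ) :
    (2*(b+c)).choose (2*b) ≡ (b+c).choose b [MOD 4] := by
  rw [← ZMod.natCast_eq_natCast_iff]
  have id := my_nat_identity (p := 2) two_pos 1 b c
  simp only [one_mul, mul_one] at id
  have hset : (Ioc 0 2).filter (fun u => ¬ 2 ∣ u) = {1} := by decide
  rw [hset] at id
  simp only [Finset.prod_singleton] at id
  -- id : (b+c).choose b * ∏ k in range (b+c), (2*k+1) = (2*(b+c)).choose (2*b) * (..b * ..c)
  have idc := congrArg (Nat.cast : ℕ → ZMod 4) id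
  have hV : ∀ x : ℕ, ((∏ k ∈ range x, (2*k+1) : ℕ) : ZMod 4) = (-1)^(∑ k ∈ range x, k) := by
    intro x
    rw [Nat.cast_prod, Finset.prod_congr rfl (fun k _ => my_sgn k),
      Finset.prod_pow_eq_pow_sum]
  rw [Nat.cast_mul, Nat.cast_mul, Nat.cast_mul, hV, hV, hV, my_gauss, ← pow_add] at idc
  rw [pow_add ((-1 : ZMod 4)) _ (b*c)] at idc
  have hU : IsUnit ((-1 : ZMod 4)^((∑ k ∈ range b, k) + (∑ k ∈ range c, k))) :=
    (isUnit_one.neg).pow _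
  have idd : ((2*(b+c)).choose (2*b) : ZMod 4) = ((b+c).choose b : ZMod 4) * (-1)^(b*c) := by
    refine hU.mul_left_cancel ?_
    calc (-1 : ZMod 4)^((∑ k ∈ range b, k) + (∑ k ∈ range c, k)) * ((2*(b+c)).choose (2*b) : ZMod 4)
        = ((2*(b+c)).choose (2*b) : ZMod 4) * (-1)^((∑ k ∈ range b, k) + (∑ k ∈ range c, k)) := by ring
      _ = _ := by rw [← idc]; ring
  rcases Nat.even_or_odd (b*c) with he | ho
  · rw [idd, he.neg_one_pow, mul_one]
  · rw [idd, ho.neg_one_pow]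
    obtain ⟨hb, hc⟩ := Nat.odd_mul.mp ho
    obtain ⟨e, he⟩ := my_even_choose hb hc
    have h0 : ((2 * ((b+c).choose b) : ℕ) : ZMod 4) = 0 := by
      rw [ZMod.natCast_eq_zero_iff, he]
      exact ⟨e, by ring⟩
    push_cast at h0
    linear_combination -h0


private lemma my_choose_cong {p : ℕ} (hp : p.Prime) {r : ℕ} (hr : 1 ≤ r) (b c : ℕ) :
    (p^r*(b+c)).choose (p^r*b) ≡ (p^(r-1)*(b+c)).choose (p^(r-1)*b) [MOD p^(2*r)] := by
  by_cases hne : p = 2 ∧ r = 1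
  · obtain ⟨hp2, hr1⟩ := hne
    subst hp2; subst hr1
    simpa using my_key2 b c
  · exact my_key hp hr hne b c

private lemma my_multi {p : ℕ} (hp : p.Prime) {r : ℕ} (hr : 1 ≤ r) {ι : Type*} [DecidableEq ι]
    (s : Finset ι) (f : ι → ℕ) :
    Nat.multinomial s (fun i => p^r * f i)
      ≡ Nat.multinomial s (fun i => p^(r-1) * f i) [MOD p^(2*r)] := by
  induction s using Finset.induction_on with
  | empty => simp; rfl
  | insert _ _ hnot ih =>
    rename_i a s
    rw [Nat.multinomial_insert hnot, Nat.multinomial_insert hnot]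
    have h1 : (p^r * f a + ∑ i ∈ s, p^r * f i) = p^r * (f a + ∑ i ∈ s, f i) := by
      rw [mul_add, Finset.mul_sum]
    have h2 : (p^(r-1) * f a + ∑ i ∈ s, p^(r-1) * f i) = p^(r-1) * (f a + ∑ i ∈ s, f i) := by
      rw [mul_add, Finset.mul_sum]
    rw [h1, h2]
    exact (my_choose_cong hp hr (f a) (∑ i ∈ s, f i)).mul ih

/-- For a prime `p`, `r ≥ 1` and nonnegative integers `a_1, ..., a_n` summing to `a`,
the multinomial coefficient of `(p^r a_1, ..., p^r a_n)` is congruent to that of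
`(p^(r-1) a_1, ..., p^(r-1) a_n)` modulo `p^(2r)`. -/
theorem stmt_16 (p : ℕ) (hp : p.Prime) (r : ℕ) (hr : 1 ≤ r)
    (n : ℕ) (a : Fin n → ℕ) (A : ℕ) (hA : ∑ i, a i = A) :
    Nat.multinomial Finset.univ (fun i => p ^ r * a i)
      ≡ Nat.multinomial Finset.univ (fun i => p ^ (r - 1) * a i) [MOD p ^ (2 * r)] := by
  exact my_multi hp hr Finset.univ a
end
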